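/- Let ρ be a pure bipartite state, i.e., ρ(i₁,i₂; j₁,j₂) = R(i₁,i₂)·conj(R(j₁,j₂)) for some N×N complex matrix R. Then the quantum permanent QP(ρ) = N!·|det(R)|². -/

import Mathlib

open Matrix Equiv
open scoped ComplexOrder

/-- The quantum permanent of a matrix on `ℂ^N ⊗ ℂ^N`:
`QP(ρ) = Σ_{τ₁,τ₂,τ₃ ∈ S_N} sgn(τ₁)sgn(τ₂)sgn(τ₃) Π_i ρ(i,τ₁(i); τ₂(i),τ₃(i))`. -/
noncomputable def QP {N : ℕ} (ρ : Matrix (Fin N × Fin N) (Fin N × Fin N) ℂ) : ℂ :=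
  ∑ τ₁ : Perm (Fin N), ∑ τ₂ : Perm (Fin N), ∑ τ₃ : Perm (Fin N),
    ((Perm.sign τ₁ : ℤ) * (Perm.sign τ₂ : ℤ) * (Perm.sign τ₃ : ℤ) : ℂ) *
      ∏ i : Fin N, ρ (i, τ₁ i) (τ₂ i, τ₃ i)

theorem QP_pure_state {N : ℕ} (R : Matrix (Fin N) (Fin N) ℂ)
    (ρ : Matrix (Fin N × Fin N) (Fin N × Fin N) ℂ)
    (hρ : ∀ i₁ i₂ j₁ j₂ : Fin N,
      ρ (i₁, i₂) (j₁, j₂) = R i₁ i₂ * (starRingEnd ℂ) (R j₁ j₂)) :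
    QP ρ = (N.factorial : ℂ) * (‖R.det‖ ^ 2 : ℝ) := by
  have hdet : ∑ τ : Perm (Fin N), ((Perm.sign τ : ℤ) : ℂ) * ∏ i, R i (τ i) = R.det := by
    rw [← det_transpose, det_apply']
    simp [Matrix.transpose_apply]
  have hconj : ∀ τ₂ : Perm (Fin N),
      ∑ τ₃ : Perm (Fin N), ((Perm.sign τ₂ : ℤ) : ℂ) * ((Perm.sign τ₃ : ℤ) : ℂ) *
        ∏ i, (starRingEnd ℂ) (R (τ₂ i) (τ₃ i)) = (starRingEnd ℂ) R.det := by
    intro τ₂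
    rw [← Fintype.sum_equiv (Equiv.mulRight τ₂)
      (fun σ => ((Perm.sign σ : ℤ) : ℂ) * ∏ i, (starRingEnd ℂ) (R i (σ i)))
      (fun τ₃ => ((Perm.sign τ₂ : ℤ) : ℂ) * ((Perm.sign τ₃ : ℤ) : ℂ) *
        ∏ i, (starRingEnd ℂ) (R (τ₂ i) (τ₃ i)))]
    · rw [← hdet, map_sum]
      congr 1; ext σ
      simp [map_prod]
    · intro σ
      have hs : Perm.sign τ₂ * Perm.sign (σ * τ₂) = Perm.sign σ := by
        rw [Perm.sign_mul]
        rw [mul_comm (Perm.sign σ), ← mul_assoc]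
        simp
      have hp : ∏ i, (starRingEnd ℂ) (R (τ₂ i) ((σ * τ₂) i))
          = ∏ i, (starRingEnd ℂ) (R i (σ i)) := by
        exact Equiv.prod_comp τ₂ (fun j => (starRingEnd ℂ) (R j (σ j)))
      simp only [Equiv.coe_mulRight]
      rw [hp, ← hs]
      push_cast
      ring
  have key : QP ρ =
      (∑ τ₁ : Perm (Fin N), ((Perm.sign τ₁ : ℤ) : ℂ) * ∏ i, R i (τ₁ i)) *
      (∑ τ₂ : Perm (Fin N), ∑ τ₃ : Perm (Fin N),
        ((Perm.sign τ₂ : ℤ) : ℂ) * ((Perm.sign τ₃ : ℤ) : ℂ) *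
          ∏ i, (starRingEnd ℂ) (R (τ₂ i) (τ₃ i))) := by
    rw [QP, Finset.sum_mul]
    congr 1; ext τ₁
    rw [Finset.mul_sum, Finset.sum_congr rfl]
    intro τ₂ _
    rw [Finset.mul_sum, Finset.sum_congr rfl]
    intro τ₃ _
    simp only [hρ, Finset.prod_mul_distrib]
    push_cast
    ring
  rw [key, hdet]
  have : ∑ τ₂ : Perm (Fin N), ∑ τ₃ : Perm (Fin N),
      ((Perm.sign τ₂ : ℤ) : ℂ) * ((Perm.sign τ₃ : ℤ) : ℂ) *
        ∏ i, (starRingEnd ℂ) (R (τ₂ i) (τ₃ i)) =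
      (N.factorial : ℂ) * (starRingEnd ℂ) R.det := by
    rw [Finset.sum_congr rfl (fun τ₂ _ => hconj τ₂)]
    simp [Fintype.card_perm, mul_comm]
  rw [this]
  rw [← Complex.normSq_eq_norm_sq, ← Complex.mul_conj]
  ring
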